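/- Let K = 2^m for a natural number m ≥ 1 and let a : [0, ∞) → ℝ^{K−1} be a solution of the logit-optimization dynamics da_i/dt = b_i(a)/D(a) with a_i(0) > 0 for all i. Then the metric M(a) = (1/2)·Σ_{i=1}^{K−1} (â_i − 1/(K−1))² is nonincreasing along the trajectory; equivalently, for every a with positive entries, Σ_i â_i b_i(a) − (Σ_i â_i²)·(Σ_j b_j(a)) ≤ 0, with equality if and only if â = (1/(K−1))·1_{K−1}. -/

import Mathlib

open Matrix Finset

noncomputable section

/-- The Sylvester Hadamard matrix `Φ_{2^m}`, defined recursively by `Φ₁ = (1)` and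
`Φ_{2^{m+1}} = [[Φ_{2^m}, Φ_{2^m}], [Φ_{2^m}, -Φ_{2^m}]]`. -/
def sylvester : (m : ℕ) → Matrix (Fin (2 ^ m)) (Fin (2 ^ m)) ℝ
  | 0 => Matrix.of fun _ _ => 1
  | m + 1 => Matrix.of fun i j =>
      (if 2 ^ m ≤ i.val ∧ 2 ^ m ≤ j.val then -1 else 1) *
        sylvester m ⟨i.val % 2 ^ m, Nat.mod_lt _ (Nat.two_pow_pos m)⟩
          ⟨j.val % 2 ^ m, Nat.mod_lt _ (Nat.two_pow_pos m)⟩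

/-- The core `X = Φ[2:K, 2:K]` obtained by deleting the first row and column of `Φ`. -/
def hadCore (m : ℕ) : Matrix (Fin (2 ^ m - 1)) (Fin (2 ^ m - 1)) ℝ :=
  Matrix.of fun i j =>
    sylvester m ⟨i.val + 1, by have h1 := Nat.two_pow_pos m; have h2 := i.isLt; omega⟩
      ⟨j.val + 1, by have h1 := Nat.two_pow_pos m; have h2 := j.isLt; omega⟩

/-- `Ψ = 1 1ᵀ − X`. -/
def PsiM (m : ℕ) : Matrix (Fin (2 ^ m - 1)) (Fin (2 ^ m - 1)) ℝ :=
  Matrix.of fun i j => 1 - hadCore m i j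

/-- `b_i(a) = Σ_j Ψ_{ij} exp(−(Ψa)_j)`. -/
def bVec (m : ℕ) (a : Fin (2 ^ m - 1) → ℝ) (i : Fin (2 ^ m - 1)) : ℝ :=
  ∑ j, PsiM m i j * Real.exp (-((PsiM m).mulVec a j))

/-- `D(a) = 1 + Σ_j exp(−(Ψa)_j)`. -/
def Dden (m : ℕ) (a : Fin (2 ^ m - 1) → ℝ) : ℝ :=
  1 + ∑ j, Real.exp (-((PsiM m).mulVec a j))

/-- The energy `E(a) = log(1 + Σ_j exp(−(Ψa)_j))`. -/
def energyE (m : ℕ) (a : Fin (2 ^ m - 1) → ℝ) : ℝ :=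
  Real.log (1 + ∑ j, Real.exp (-((PsiM m).mulVec a j)))

/-- `b̄(a) = Σ_j â_j b_j(a)` with `â = a / ‖a‖₁`. -/
def bbar (m : ℕ) (a : Fin (2 ^ m - 1) → ℝ) : ℝ :=
  ∑ j, (a j / ∑ k, a k) * bVec m a j

/-- `M(a) = (1/2) Σ_i (â_i − 1/(K−1))²`. -/
def Mmetric (m : ℕ) (a : Fin (2 ^ m - 1) → ℝ) : ℝ :=
  (1 / 2) * ∑ i, (a i / (∑ k, a k) - 1 / ((2 : ℝ) ^ m - 1)) ^ 2

lemma sylvester_succ_apply (m : ℕ) (p q : Fin (2 ^ (m+1))) :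
    sylvester (m+1) p q =
      (if 2 ^ m ≤ p.val ∧ 2 ^ m ≤ q.val then (-1:ℝ) else 1) *
        sylvester m ⟨p.val % 2 ^ m, Nat.mod_lt _ (Nat.two_pow_pos m)⟩
          ⟨q.val % 2 ^ m, Nat.mod_lt _ (Nat.two_pow_pos m)⟩ := rfl

lemma sylvester_pm (m : ℕ) (i j : Fin (2 ^ m)) :
    sylvester m i j = 1 ∨ sylvester m i j = -1 := by
  induction m with
  | zero => left; rfl
  | succ m ih =>
    rw [sylvester_succ_apply]
    rcases ih ⟨i.val % 2 ^ m, Nat.mod_lt _ (Nat.two_pow_pos m)⟩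
      ⟨j.val % 2 ^ m, Nat.mod_lt _ (Nat.two_pow_pos m)⟩ with h | h <;>
        rw [h] <;> split <;> simp

lemma sylvester_symm (m : ℕ) (i j : Fin (2 ^ m)) :
    sylvester m i j = sylvester m j i := by
  induction m with
  | zero => rfl
  | succ m ih =>
    rw [sylvester_succ_apply, sylvester_succ_apply, ih]
    by_cases h : 2 ^ m ≤ i.val ∧ 2 ^ m ≤ j.val
    · rw [if_pos h, if_pos ⟨h.2, h.1⟩]
    · rw [if_neg h, if_neg (fun hc => h ⟨hc.2, hc.1⟩)]

lemma sylvester_first_col (m : ℕ) (i : Fin (2 ^ m)) :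
    sylvester m i ⟨0, Nat.two_pow_pos m⟩ = 1 := by
  induction m with
  | zero => rfl
  | succ m ih =>
    rw [sylvester_succ_apply, if_neg (fun h => by have h2 : (2:ℕ)^m ≤ 0 := h.2; have := Nat.two_pow_pos m; omega)]
    have h0 : (0 : ℕ) % 2 ^ m = 0 := Nat.zero_mod _
    simp only [h0, one_mul]
    exact ih _

lemma sylvester_orth (m : ℕ) (i j : Fin (2 ^ m)) :
    ∑ k, sylvester m i k * sylvester m j k = if i = j then (2:ℝ) ^ m else 0 := by
  induction m with
  | zero =>
    have h : i = j := Fin.ext (by omega)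
    subst h
    simp [sylvester]
  | succ m ih =>
    have hsplit : 2 ^ m + 2 ^ m = 2 ^ (m + 1) := by ring
    have hsum : ∀ f : Fin (2 ^ (m+1)) → ℝ, ∑ k, f k =
        (∑ k : Fin (2 ^ m), f (Fin.cast hsplit (Fin.castAdd (2 ^ m) k))) +
        (∑ k : Fin (2 ^ m), f (Fin.cast hsplit (Fin.natAdd (2 ^ m) k))) := by
      intro f
      rw [← Fin.sum_congr' f hsplit, Fin.sum_univ_add]
    rw [hsum]
    set i' : Fin (2 ^ m) := ⟨i.val % 2 ^ m, Nat.mod_lt _ (Nat.two_pow_pos m)⟩ with hi'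
    set j' : Fin (2 ^ m) := ⟨j.val % 2 ^ m, Nat.mod_lt _ (Nat.two_pow_pos m)⟩ with hj'
    have hlow : ∀ k : Fin (2 ^ m),
        sylvester (m+1) i (Fin.cast hsplit (Fin.castAdd (2 ^ m) k)) *
        sylvester (m+1) j (Fin.cast hsplit (Fin.castAdd (2 ^ m) k)) =
        sylvester m i' k * sylvester m j' k := by
      intro k
      have hk : (Fin.cast hsplit (Fin.castAdd (2 ^ m) k)).val = k.val := rfl
      rw [sylvester_succ_apply, sylvester_succ_apply]
      have hklt : k.val < 2 ^ m := k.isLt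
      rw [if_neg (by omega), if_neg (by omega)]
      have : (⟨(Fin.cast hsplit (Fin.castAdd (2 ^ m) k)).val % 2 ^ m,
          Nat.mod_lt _ (Nat.two_pow_pos m)⟩ : Fin (2 ^ m)) = k := by
        apply Fin.ext; simp [hk, Nat.mod_eq_of_lt hklt]
      rw [this]; ring
    have hhigh : ∀ k : Fin (2 ^ m),
        sylvester (m+1) i (Fin.cast hsplit (Fin.natAdd (2 ^ m) k)) *
        sylvester (m+1) j (Fin.cast hsplit (Fin.natAdd (2 ^ m) k)) =
        ((if 2 ^ m ≤ i.val then (-1:ℝ) else 1) * (if 2 ^ m ≤ j.val then (-1:ℝ) else 1)) *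
          (sylvester m i' k * sylvester m j' k) := by
      intro k
      have hk : (Fin.cast hsplit (Fin.natAdd (2 ^ m) k)).val = 2 ^ m + k.val := rfl
      have hklt : k.val < 2 ^ m := k.isLt
      have hkmod : (2 ^ m + k.val) % 2 ^ m = k.val := by
        rw [Nat.add_mod_left]; exact Nat.mod_eq_of_lt hklt
      rw [sylvester_succ_apply, sylvester_succ_apply]
      have hcond : 2 ^ m ≤ (Fin.cast hsplit (Fin.natAdd (2 ^ m) k)).val := by
        rw [hk]; omega
      have hmk : (⟨(Fin.cast hsplit (Fin.natAdd (2 ^ m) k)).val % 2 ^ m,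
          Nat.mod_lt _ (Nat.two_pow_pos m)⟩ : Fin (2 ^ m)) = k := by
        apply Fin.ext; simp [hk, hkmod, Nat.mod_eq_of_lt hklt]
      rw [hmk]
      by_cases h1 : 2 ^ m ≤ i.val <;> by_cases h2 : 2 ^ m ≤ j.val
      · rw [if_pos ⟨h1, hcond⟩, if_pos ⟨h2, hcond⟩, if_pos h1, if_pos h2]; ring
      · rw [if_pos ⟨h1, hcond⟩, if_neg (fun hc => h2 hc.1), if_pos h1, if_neg h2]; ring
      · rw [if_neg (fun hc => h1 hc.1), if_pos ⟨h2, hcond⟩, if_neg h1, if_pos h2]; ring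
      · rw [if_neg (fun hc => h1 hc.1), if_neg (fun hc => h2 hc.1), if_neg h1, if_neg h2]; ring
    rw [Finset.sum_congr rfl (fun k _ => hlow k), Finset.sum_congr rfl (fun k _ => hhigh k),
      ← Finset.mul_sum, ih i' j']
    by_cases hij : i = j
    · subst hij
      rw [if_pos rfl, if_pos rfl]
      split_ifs <;> ring
    · rw [if_neg hij]
      by_cases hij' : i' = j'
      · rw [if_pos hij']
        have hmod : i.val % 2 ^ m = j.val % 2 ^ m := by
          have := congrArg Fin.val hij'; simpa [hi', hj'] using this
        have hne : i.val ≠ j.val := fun hc => hij (Fin.ext hc)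
        have hilt : i.val < 2 ^ (m+1) := i.isLt
        have hjlt : j.val < 2 ^ (m+1) := j.isLt
        have hpow : 2 ^ (m+1) = 2 ^ m + 2 ^ m := by ring
        have hdvd1 := Nat.div_add_mod i.val (2 ^ m)
        have hdvd2 := Nat.div_add_mod j.val (2 ^ m)
        have hq1 : i.val / 2 ^ m < 2 := Nat.div_lt_of_lt_mul (by omega)
        have hq2 : j.val / 2 ^ m < 2 := Nat.div_lt_of_lt_mul (by omega)
        have hle1 : 2 ^ m ≤ i.val ↔ 1 ≤ i.val / 2 ^ m :=
          (Nat.one_le_div_iff (Nat.two_pow_pos m)).symm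
        have hle2 : 2 ^ m ≤ j.val ↔ 1 ≤ j.val / 2 ^ m :=
          (Nat.one_le_div_iff (Nat.two_pow_pos m)).symm
        have hone : (2 ^ m ≤ i.val ∧ ¬ 2 ^ m ≤ j.val) ∨ (¬ 2 ^ m ≤ i.val ∧ 2 ^ m ≤ j.val) := by
          have e1 : i.val / 2 ^ m = 0 ∨ i.val / 2 ^ m = 1 := by interval_cases h : i.val / 2 ^ m <;> simp
          have e2 : j.val / 2 ^ m = 0 ∨ j.val / 2 ^ m = 1 := by interval_cases h : j.val / 2 ^ m <;> simp
          rw [hle1, hle2]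
          rcases e1 with e1 | e1 <;> rcases e2 with e2 | e2 <;>
            rw [e1] at hdvd1 ⊢ <;> rw [e2] at hdvd2 ⊢ <;>
            simp only [Nat.mul_zero, Nat.mul_one, Nat.zero_add] at hdvd1 hdvd2 <;> omega
        rcases hone with ⟨h1, h2⟩ | ⟨h1, h2⟩
        · rw [if_pos h1, if_neg h2]; ring
        · rw [if_neg h1, if_pos h2]; ring
      · rw [if_neg hij']; ring

lemma psi_mem (m : ℕ) (i j : Fin (2 ^ m - 1)) : PsiM m i j = 0 ∨ PsiM m i j = 2 := by
  rcases sylvester_pm m ⟨i.val + 1, by have h1 := Nat.two_pow_pos m; have h2 := i.isLt; omega⟩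
    ⟨j.val + 1, by have h1 := Nat.two_pow_pos m; have h2 := j.isLt; omega⟩ with h | h <;>
      [left; right] <;> simp [PsiM, hadCore, h] <;> norm_num

lemma psi_nonneg (m : ℕ) (i j : Fin (2 ^ m - 1)) : 0 ≤ PsiM m i j := by
  rcases psi_mem m i j with h | h <;> rw [h] <;> norm_num

lemma psi_symm (m : ℕ) (i j : Fin (2 ^ m - 1)) : PsiM m i j = PsiM m j i := by
  simp only [PsiM, hadCore, Matrix.of_apply]
  rw [sylvester_symm]

/-- splitting a sum over `Fin (2^m)` into index 0 and the rest -/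
lemma sum_split (m : ℕ) (f : Fin (2 ^ m) → ℝ) :
    ∑ k, f k = f ⟨0, Nat.two_pow_pos m⟩ +
      ∑ j : Fin (2 ^ m - 1), f ⟨j.val + 1,
        by have h1 := Nat.two_pow_pos m; have h2 := j.isLt; omega⟩ := by
  have h : 2 ^ m - 1 + 1 = 2 ^ m := by have := Nat.two_pow_pos m; omega
  rw [← Fin.sum_congr' f h, Fin.sum_univ_succ]
  rfl

lemma row_sum_sylvester (m : ℕ) (hm : 1 ≤ m) (i : Fin (2 ^ m - 1)) :
    ∑ j : Fin (2 ^ m - 1), hadCore m i j = -1 := by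
  have hi1 : i.val + 1 < 2 ^ m := by have h1 := i.isLt; have := Nat.two_pow_pos m; omega
  set I : Fin (2 ^ m) := ⟨i.val + 1, hi1⟩
  have h0 : ∀ k : Fin (2 ^ m), sylvester m I k = sylvester m I k * sylvester m ⟨0, Nat.two_pow_pos m⟩ k := by
    intro k
    rw [sylvester_symm m ⟨0, Nat.two_pow_pos m⟩ k, sylvester_first_col, mul_one]
  have horth := sylvester_orth m I ⟨0, Nat.two_pow_pos m⟩
  rw [if_neg (by intro hc; have := congrArg Fin.val hc; simp [I] at this)] at horth
  have hsum : ∑ k : Fin (2 ^ m), sylvester m I k = 0 := by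
    rw [Finset.sum_congr rfl (fun k _ => h0 k)]; exact horth
  rw [sum_split m (fun k => sylvester m I k)] at hsum
  have hfc : sylvester m I ⟨0, Nat.two_pow_pos m⟩ = 1 := sylvester_first_col m I
  have : ∑ j : Fin (2 ^ m - 1), hadCore m i j =
      ∑ j : Fin (2 ^ m - 1), sylvester m I ⟨j.val + 1,
        by have h1 := Nat.two_pow_pos m; have h2 := j.isLt; omega⟩ := rfl
  rw [this]
  linarith [hsum, hfc]

lemma psi_row_sum (m : ℕ) (hm : 1 ≤ m) (i : Fin (2 ^ m - 1)) :
    ∑ j : Fin (2 ^ m - 1), PsiM m i j = 2 ^ m := by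
  have hcard : ((2 ^ m - 1 : ℕ) : ℝ) = 2 ^ m - 1 := by
    have := Nat.one_le_two_pow (n := m)
    push_cast [Nat.cast_sub this]
    ring
  simp only [PsiM, Matrix.of_apply, Finset.sum_sub_distrib, row_sum_sylvester m hm i,
    Finset.sum_const, Finset.card_univ, Fintype.card_fin, nsmul_eq_mul, mul_one]
  rw [hcard]; ring

lemma core_orth (m : ℕ) (i j : Fin (2 ^ m - 1)) :
    ∑ k : Fin (2 ^ m - 1), hadCore m i k * hadCore m j k =
      (if i = j then (2:ℝ) ^ m else 0) - 1 := by
  have hi1 : i.val + 1 < 2 ^ m := by have h1 := i.isLt; have := Nat.two_pow_pos m; omega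
  have hj1 : j.val + 1 < 2 ^ m := by have h1 := j.isLt; have := Nat.two_pow_pos m; omega
  set I : Fin (2 ^ m) := ⟨i.val + 1, hi1⟩
  set J : Fin (2 ^ m) := ⟨j.val + 1, hj1⟩
  have horth := sylvester_orth m I J
  rw [sum_split m (fun k => sylvester m I k * sylvester m J k)] at horth
  have hfc : sylvester m I ⟨0, Nat.two_pow_pos m⟩ * sylvester m J ⟨0, Nat.two_pow_pos m⟩ = 1 := by
    rw [sylvester_first_col, sylvester_first_col, mul_one]
  have hIJ : (I = J) ↔ (i = j) := by
    constructor
    · intro hc; apply Fin.ext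
      have := congrArg Fin.val hc; simp [I, J] at this; exact this
    · intro hc; subst hc; rfl
  have hcore : ∑ k : Fin (2 ^ m - 1), hadCore m i k * hadCore m j k =
      ∑ k : Fin (2 ^ m - 1), sylvester m I ⟨k.val + 1,
          by have h1 := Nat.two_pow_pos m; have h2 := k.isLt; omega⟩ *
        sylvester m J ⟨k.val + 1,
          by have h1 := Nat.two_pow_pos m; have h2 := k.isLt; omega⟩ := rfl
  rw [hcore]
  by_cases hij : i = j
  · rw [if_pos hij, if_pos (hIJ.mpr hij)] at *
    linarith [horth, hfc]
  · rw [if_neg hij, if_neg (fun hc => hij (hIJ.mp hc))] at *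
    linarith [horth, hfc]

lemma psi_prod_sum (m : ℕ) (hm : 1 ≤ m) (i j : Fin (2 ^ m - 1)) :
    ∑ k : Fin (2 ^ m - 1), PsiM m i k * PsiM m j k =
      (if i = j then (2:ℝ) ^ m else 0) + 2 ^ m := by
  have hcard : ((2 ^ m - 1 : ℕ) : ℝ) = 2 ^ m - 1 := by
    have := Nat.one_le_two_pow (n := m)
    push_cast [Nat.cast_sub this]
    ring
  have expand : ∀ k : Fin (2 ^ m - 1), PsiM m i k * PsiM m j k =
      1 - hadCore m i k - hadCore m j k + hadCore m i k * hadCore m j k := by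
    intro k; simp only [PsiM, Matrix.of_apply]; ring
  rw [Finset.sum_congr rfl (fun k _ => expand k)]
  simp only [Finset.sum_add_distrib, Finset.sum_sub_distrib, Finset.sum_const,
    Finset.card_univ, Fintype.card_fin, nsmul_eq_mul, mul_one,
    row_sum_sylvester m hm i, row_sum_sylvester m hm j, core_orth m i j]
  rw [hcard]; ring

lemma bVec_pos (m : ℕ) (hm : 1 ≤ m) (c : Fin (2 ^ m - 1) → ℝ) (i : Fin (2 ^ m - 1)) :
    0 < bVec m c i := by
  have hrow := psi_row_sum m hm i
  apply Finset.sum_pos'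
  · intro j _
    exact mul_nonneg (psi_nonneg m i j) (Real.exp_pos _).le
  · by_contra hne
    push_neg at hne
    have hzero : ∀ j ∈ Finset.univ, PsiM m i j = 0 := by
      intro j _
      rcases psi_mem m i j with h | h
      · exact h
      · exfalso
        have := hne j (Finset.mem_univ j)
        have := mul_pos (by rw [h]; norm_num : (0:ℝ) < PsiM m i j) (Real.exp_pos (-((PsiM m).mulVec c j)))
        linarith
    rw [Finset.sum_congr rfl hzero, Finset.sum_const, smul_zero] at hrow
    have : (0:ℝ) < 2 ^ m := by positivity
    linarith

lemma Dden_pos (m : ℕ) (c : Fin (2 ^ m - 1) → ℝ) : 0 < Dden m c := by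
  have : 0 ≤ ∑ j, Real.exp (-((PsiM m).mulVec c j)) :=
    Finset.sum_nonneg fun j _ => (Real.exp_pos _).le
  unfold Dden; linarith

lemma mainIneq (m : ℕ) (hm : 1 ≤ m) (c : Fin (2 ^ m - 1) → ℝ) (hc : ∀ i, 0 < c i) :
    ((∑ i, (c i / ∑ k, c k) * bVec m c i) -
      (∑ i, (c i / ∑ k, c k) ^ 2) * (∑ j, bVec m c j) ≤ 0 ∧
    ((∑ i, (c i / ∑ k, c k) * bVec m c i) -
      (∑ i, (c i / ∑ k, c k) ^ 2) * (∑ j, bVec m c j) = 0 ↔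
      ∀ i, c i / (∑ k, c k) = 1 / ((2 : ℝ) ^ m - 1))) := by
  classical
  have hne : (Finset.univ : Finset (Fin (2 ^ m - 1))).Nonempty := by
    rw [Finset.univ_nonempty_iff]
    refine Fin.pos_iff_nonempty.mp ?_
    have : 2 ≤ 2 ^ m := by
      calc 2 = 2 ^ 1 := by norm_num
      _ ≤ 2 ^ m := Nat.pow_le_pow_right (by norm_num) hm
    omega
  set K : ℝ := (2:ℝ) ^ m with hK
  have hK2 : (2:ℝ) ≤ K := by
    rw [hK]
    calc (2:ℝ) = 2 ^ 1 := by norm_num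
    _ ≤ 2 ^ m := by apply pow_le_pow_right₀ (by norm_num) hm
  set N : ℝ := K - 1 with hNdef
  have hN : 0 < N := by rw [hNdef]; linarith
  have hcard : ((Fintype.card (Fin (2 ^ m - 1)) : ℝ)) = N := by
    rw [Fintype.card_fin]
    rw [hNdef, hK]
    have h1 : (1:ℕ) ≤ 2 ^ m := Nat.one_le_two_pow
    push_cast [Nat.cast_sub h1]
    ring
  set S : ℝ := ∑ k, c k with hS
  have hSpos : 0 < S := Finset.sum_pos (fun i _ => hc i) hne
  set u : Fin (2 ^ m - 1) → ℝ := fun i => c i / S with hu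
  have hsumu : ∑ i, u i = 1 := by
    rw [hu, ← Finset.sum_div]
    field_simp
    exact hS.symm
  set e : Fin (2 ^ m - 1) → ℝ := fun j => Real.exp (-((PsiM m).mulVec c j)) with he
  have hepos : ∀ j, 0 < e j := fun j => Real.exp_pos _
  set w : Fin (2 ^ m - 1) → ℝ := fun j => ∑ k, PsiM m j k * u k with hw
  have hcw : ∀ k, c k = u k * S := by
    intro k; rw [hu]; field_simp
  have hmv : ∀ j, (PsiM m).mulVec c j = S * w j := by
    intro j
    rw [Matrix.mulVec, dotProduct, hw]
    rw [Finset.mul_sum]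
    apply Finset.sum_congr rfl
    intro k _
    rw [hcw k]; ring
  have hew : ∀ j, e j = Real.exp (-(S * w j)) := by
    intro j; rw [he]; simp only; rw [hmv j]
  have hbv : ∀ i, bVec m c i = ∑ j, PsiM m i j * e j := fun i => rfl
  set E : ℝ := ∑ j, e j with hE
  have hEpos : 0 < E := Finset.sum_pos (fun j _ => hepos j) hne
  set WE : ℝ := ∑ j, w j * e j with hWE
  set W2 : ℝ := ∑ j, (w j) ^ 2 with hW2
  set SU2 : ℝ := ∑ i, (u i) ^ 2 with hSU2
  -- h1 : ∑ u_i b_i = WE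
  have h1 : ∑ i, u i * bVec m c i = WE := by
    rw [hWE]
    calc ∑ i, u i * bVec m c i = ∑ i, ∑ j, u i * (PsiM m i j * e j) := by
          apply Finset.sum_congr rfl; intro i _; rw [hbv i, Finset.mul_sum]
    _ = ∑ j, ∑ i, u i * (PsiM m i j * e j) := Finset.sum_comm
    _ = ∑ j, w j * e j := by
          apply Finset.sum_congr rfl; intro j _
          rw [hw]; simp only
          rw [Finset.sum_mul]
          apply Finset.sum_congr rfl; intro i _
          rw [psi_symm m j i]; ring
  -- h2 : ∑ b_j = K E
  have h2 : ∑ j, bVec m c j = K * E := by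
    rw [hE, Finset.mul_sum]
    calc ∑ j, bVec m c j = ∑ j, ∑ k, PsiM m j k * e k := by
          apply Finset.sum_congr rfl; intro j _; rw [hbv j]
    _ = ∑ k, ∑ j, PsiM m j k * e k := Finset.sum_comm
    _ = ∑ k, K * e k := by
          apply Finset.sum_congr rfl; intro k _
          rw [← Finset.sum_mul]
          congr 1
          calc ∑ j, PsiM m j k = ∑ j, PsiM m k j := by
                apply Finset.sum_congr rfl; intro j _; rw [psi_symm]
          _ = K := psi_row_sum m hm k
  -- h3 : ∑ w = K
  have h3 : ∑ j, w j = K := by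
    calc ∑ j, w j = ∑ j, ∑ k, PsiM m j k * u k := rfl
    _ = ∑ k, ∑ j, PsiM m j k * u k := Finset.sum_comm
    _ = ∑ k, K * u k := by
          apply Finset.sum_congr rfl; intro k _
          rw [← Finset.sum_mul]
          congr 1
          calc ∑ j, PsiM m j k = ∑ j, PsiM m k j := by
                apply Finset.sum_congr rfl; intro j _; rw [psi_symm]
          _ = K := psi_row_sum m hm k
    _ = K * 1 := by rw [← Finset.mul_sum, hsumu]
    _ = K := mul_one K
  -- h4 : W2 = K SU2 + K
  have hpp : ∀ i k : Fin (2 ^ m - 1), ∑ j, PsiM m j i * PsiM m j k =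
      (if i = k then K else 0) + K := by
    intro i k
    calc ∑ j, PsiM m j i * PsiM m j k = ∑ j, PsiM m i j * PsiM m k j := by
          apply Finset.sum_congr rfl; intro j _; rw [psi_symm m j i, psi_symm m j k]
    _ = (if i = k then K else 0) + K := psi_prod_sum m hm i k
  have h4 : W2 = K * SU2 + K := by
    calc W2 = ∑ j, (∑ i, PsiM m j i * u i) * (∑ k, PsiM m j k * u k) := by
          rw [hW2]; apply Finset.sum_congr rfl; intro j _; rw [hw]; ring
    _ = ∑ j, ∑ i, ∑ k, (PsiM m j i * u i) * (PsiM m j k * u k) := by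
          apply Finset.sum_congr rfl; intro j _; rw [Finset.sum_mul_sum]
    _ = ∑ i, ∑ j, ∑ k, (PsiM m j i * u i) * (PsiM m j k * u k) := Finset.sum_comm
    _ = ∑ i, ∑ k, ∑ j, (PsiM m j i * u i) * (PsiM m j k * u k) := by
          apply Finset.sum_congr rfl; intro i _; exact Finset.sum_comm
    _ = ∑ i, ∑ k, (u i * u k) * ((if i = k then K else 0) + K) := by
          apply Finset.sum_congr rfl; intro i _
          apply Finset.sum_congr rfl; intro k _
          rw [← hpp i k, Finset.mul_sum]
          apply Finset.sum_congr rfl; intro j _; ring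
    _ = ∑ i, (u i ^ 2 * K + u i * K) := by
          apply Finset.sum_congr rfl; intro i _
          have hterm : ∀ k, (u i * u k) * ((if i = k then K else 0) + K) =
              (if i = k then u i * u k * K else 0) + u i * u k * K := by
            intro k; split_ifs <;> ring
          rw [Finset.sum_congr rfl (fun k _ => hterm k), Finset.sum_add_distrib,
            Finset.sum_ite_eq, if_pos (Finset.mem_univ i)]
          have h2' : ∑ k, u i * u k * K = u i * K := by
            have : ∑ k, u i * u k * K = (u i * K) * ∑ k, u k := by
              rw [Finset.mul_sum]; apply Finset.sum_congr rfl; intro k _; ring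
            rw [this, hsumu, mul_one]
          rw [h2']; ring
    _ = K * SU2 + K := by
          rw [Finset.sum_add_distrib, ← Finset.sum_mul, ← Finset.sum_mul, hsumu, hSU2]
          ring
  have hcu : ∀ i, c i / S = u i := fun i => rfl
  simp only [hcu]
  have hQrw : ∑ i, u i * bVec m c i - (∑ i, (u i) ^ 2) * (∑ j, bVec m c j)
      = WE - (W2 - K) * E := by
    rw [h1, h2, ← hSU2]
    have hks : K * SU2 = W2 - K := by rw [h4]; ring
    calc WE - SU2 * (K * E) = WE - (K * SU2) * E := by ring
    _ = WE - (W2 - K) * E := by rw [hks]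
  rw [hQrw]
  -- Chebyshev pairing
  set T : ℝ := ∑ j, ∑ k, (w j - w k) * (e j - e k) with hTdef
  set V : ℝ := ∑ j, (N * w j - K) ^ 2 with hVdef
  have hpair : ∀ j k, (w j - w k) * (e j - e k) ≤ 0 := by
    intro j k
    rcases le_total (w j) (w k) with h | h
    · apply mul_nonpos_iff.mpr
      right
      constructor
      · linarith
      · rw [sub_nonneg, hew j, hew k]
        apply Real.exp_le_exp.mpr
        nlinarith
    · apply mul_nonpos_iff.mpr
      left
      constructor
      · linarith
      · rw [sub_nonpos, hew j, hew k]
        apply Real.exp_le_exp.mpr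
        nlinarith
  have hT : T = 2 * N * WE - 2 * K * E := by
    rw [hTdef]
    have hinner : ∀ j, ∑ k, (w j - w k) * (e j - e k)
        = N * (w j * e j) - w j * E - K * e j + WE := by
      intro j
      have hterm : ∀ k, (w j - w k) * (e j - e k)
          = w j * e j - w j * e k - e j * w k + w k * e k := fun k => by ring
      rw [Finset.sum_congr rfl fun k _ => hterm k, Finset.sum_add_distrib,
        Finset.sum_sub_distrib, Finset.sum_sub_distrib, Finset.sum_const,
        ← Finset.mul_sum, ← Finset.mul_sum, ← hE, ← hWE, h3, Finset.card_univ,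
        nsmul_eq_mul, hcard]
      ring
    rw [Finset.sum_congr rfl fun j _ => hinner j, Finset.sum_add_distrib,
      Finset.sum_sub_distrib, Finset.sum_sub_distrib, Finset.sum_const,
      ← Finset.mul_sum, ← Finset.sum_mul, ← Finset.mul_sum, ← hWE, ← hE, h3,
      Finset.card_univ, nsmul_eq_mul, hcard]
    ring
  have hTle : T ≤ 0 := by
    rw [hTdef]
    exact Finset.sum_nonpos fun j _ => Finset.sum_nonpos fun k _ => hpair j k
  have hV : V = N ^ 2 * W2 - N * K ^ 2 := by
    rw [hVdef]
    have hterm : ∀ j, (N * w j - K) ^ 2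
        = N ^ 2 * (w j) ^ 2 - 2 * N * K * w j + K ^ 2 := fun j => by ring
    rw [Finset.sum_congr rfl fun j _ => hterm j, Finset.sum_add_distrib,
      Finset.sum_sub_distrib, Finset.sum_const, ← Finset.mul_sum, ← Finset.mul_sum,
      ← hW2, h3, Finset.card_univ, nsmul_eq_mul, hcard]
    ring
  have hVnn : 0 ≤ V := by
    rw [hVdef]
    exact Finset.sum_nonneg fun j _ => sq_nonneg _
  have hkey : N ^ 2 * (WE - (W2 - K) * E) = (N / 2) * T - V * E := by
    rw [hT, hV, hNdef]; ring
  have hThalf : (N / 2) * T ≤ 0 :=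
    mul_nonpos_iff.mpr (Or.inl ⟨by linarith, hTle⟩)
  have hVE : 0 ≤ V * E := mul_nonneg hVnn hEpos.le
  have hN2 : 0 < N ^ 2 := by positivity
  constructor
  · have h11 : N ^ 2 * (WE - (W2 - K) * E) ≤ 0 := by
      rw [hkey]; linarith
    rcases mul_nonpos_iff.mp h11 with ⟨_, hq⟩ | ⟨hn, _⟩
    · exact hq
    · linarith
  constructor
  · -- equality implies uniform
    intro h0
    have hVzero : V = 0 := by
      have hk0 : (0:ℝ) = (N / 2) * T - V * E := by
        rw [← hkey, h0, mul_zero]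
      have hprod : V * E = 0 := by linarith
      rcases mul_eq_zero.mp hprod with h | h
      · exact h
      · exact absurd h hEpos.ne'
    have hwj : ∀ j, w j = K / N := by
      intro j
      rw [hVdef] at hVzero
      have hsq := (Finset.sum_eq_zero_iff_of_nonneg fun j _ => sq_nonneg (N * w j - K)).mp
        hVzero j (Finset.mem_univ j)
      have hz : N * w j - K = 0 := by
        exact sq_eq_zero_iff.mp hsq
      rw [eq_div_iff hN.ne']
      linarith
    intro i
    have hXa : ∑ j, PsiM m i j * w j = K * u i + K := by
      calc ∑ j, PsiM m i j * w j = ∑ j, ∑ k, PsiM m i j * (PsiM m j k * u k) := by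
            apply Finset.sum_congr rfl; intro j _
            rw [hw]; simp only; rw [Finset.mul_sum]
      _ = ∑ k, ∑ j, PsiM m i j * (PsiM m j k * u k) := Finset.sum_comm
      _ = ∑ k, u k * ((if i = k then K else 0) + K) := by
            apply Finset.sum_congr rfl; intro k _
            rw [← hpp i k, Finset.mul_sum]
            apply Finset.sum_congr rfl; intro j _
            rw [psi_symm m j i]; ring
      _ = K * u i + K := by
            have hterm : ∀ k, u k * ((if i = k then K else 0) + K)
                = (if i = k then u k * K else 0) + u k * K := by
              intro k; split_ifs <;> ring
            rw [Finset.sum_congr rfl fun k _ => hterm k, Finset.sum_add_distrib,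
              Finset.sum_ite_eq, if_pos (Finset.mem_univ i), ← Finset.sum_mul, hsumu]
            ring
    have hXb : ∑ j, PsiM m i j * w j = K * (K / N) := by
      rw [Finset.sum_congr rfl fun j _ => by rw [hwj j], ← Finset.sum_mul,
        psi_row_sum m hm i]
    have h9 : K * u i + K = K * (K / N) := hXa.symm.trans hXb
    have hKpos : (0:ℝ) < K := by linarith
    rw [eq_div_iff hN.ne']
    have hui : u i = K / N - 1 := by
      apply mul_left_cancel₀ hKpos.ne'
      have hr : K * (K / N - 1) = K * (K / N) - K := by ring
      rw [hr]
      linarith [h9]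
    rw [hui]
    have hNne : N ≠ 0 := hN.ne'
    field_simp
    rw [hNdef]
    ring
  · -- uniform implies equality
    intro huni
    have huu : ∀ k, u k = 1 / N := huni
    have hwj : ∀ j, w j = K / N := by
      intro j
      rw [hw]; simp only
      rw [Finset.sum_congr rfl fun k _ => by rw [huu k], ← Finset.sum_mul,
        psi_row_sum m hm j]
      field_simp
      exact hK.symm
    have hWE' : WE = K / N * E := by
      rw [hWE, hE, Finset.mul_sum]
      apply Finset.sum_congr rfl; intro j _; rw [hwj j]
    have hW2' : W2 = N * (K / N) ^ 2 := by
      rw [hW2, Finset.sum_congr rfl fun j _ => by rw [hwj j], Finset.sum_const,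
        Finset.card_univ, nsmul_eq_mul, hcard]
    rw [hWE', hW2', hNdef]
    have hK1 : K - 1 ≠ 0 := by linarith
    field_simp
    ring

lemma deriv_identity {n : ℕ} (A B : Fin n → ℝ) (Dv S κ : ℝ) (hD : Dv ≠ 0) (hS : S ≠ 0)
    (hSA : ∑ i, A i = S) :
    (1/2) * ∑ i, (2 * (A i / S - κ) ^ 1 *
        ((B i / Dv * S - A i * (∑ k, B k / Dv)) / S ^ 2))
      = ((∑ i, (A i / S) * B i) - (∑ i, (A i / S) ^ 2) * (∑ j, B j)) / (Dv * S) := by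
  set SB : ℝ := ∑ k, B k with hSB
  have hsumdiv : ∑ k, B k / Dv = SB / Dv := by rw [hSB, Finset.sum_div]
  have hsummand : ∀ i, 2 * (A i / S - κ) ^ 1 *
      ((B i / Dv * S - A i * (∑ k, B k / Dv)) / S ^ 2)
      = (2/(Dv*S^2)) * (A i * B i) - (2*SB/(Dv*S^3)) * (A i)^2
        - (2*κ/(Dv*S)) * (B i) + (2*κ*SB/(Dv*S^2)) * (A i) := by
    intro i
    rw [hsumdiv]
    field_simp
    ring
  rw [Finset.sum_congr rfl fun i _ => hsummand i]
  rw [Finset.sum_add_distrib, Finset.sum_sub_distrib, Finset.sum_sub_distrib,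
    ← Finset.mul_sum, ← Finset.mul_sum, ← Finset.mul_sum, ← Finset.mul_sum, hSA, ← hSB]
  have hP1 : ∑ i, (A i / S) * B i = (∑ i, A i * B i) / S := by
    rw [Finset.sum_div]
    apply Finset.sum_congr rfl; intro i _; ring
  have hP2 : ∑ i, (A i / S) ^ 2 = (∑ i, (A i) ^ 2) / S ^ 2 := by
    rw [Finset.sum_div]
    apply Finset.sum_congr rfl; intro i _
    rw [div_pow]
  rw [hP1, hP2]
  field_simp
  ring

/-- monotonic convergence under direct logit optimization.
If `a : [0,∞) → ℝ^{K−1}` solves the logit-optimization dynamics `da_i/dt = b_i(a)/D(a)`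
with positive initialization, then `M(a(t))` is nonincreasing; equivalently, for every `a`
with positive entries, `Σ_i â_i b_i(a) − (Σ_i â_i²)(Σ_j b_j(a)) ≤ 0`, with equality iff
`â = (1/(K−1))·1`. -/
theorem logit_optimization_metric_monotone (m : ℕ) (hm : 1 ≤ m)
    (a : ℝ → Fin (2 ^ m - 1) → ℝ)
    (hflow : ∀ t ≥ (0 : ℝ), ∀ i, HasDerivAt (fun s => a s i)
        (bVec m (a t) i / Dden m (a t)) t)
    (hpos : ∀ i, 0 < a 0 i) :
    AntitoneOn (fun t => Mmetric m (a t)) (Set.Ici (0 : ℝ)) ∧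
    (∀ c : Fin (2 ^ m - 1) → ℝ, (∀ i, 0 < c i) →
      ((∑ i, (c i / ∑ k, c k) * bVec m c i) -
        (∑ i, (c i / ∑ k, c k) ^ 2) * (∑ j, bVec m c j) ≤ 0 ∧
       ((∑ i, (c i / ∑ k, c k) * bVec m c i) -
        (∑ i, (c i / ∑ k, c k) ^ 2) * (∑ j, bVec m c j) = 0 ↔
        ∀ i, c i / (∑ k, c k) = 1 / ((2 : ℝ) ^ m - 1)))) := by
  have hne : (Finset.univ : Finset (Fin (2 ^ m - 1))).Nonempty := by
    rw [Finset.univ_nonempty_iff]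
    refine Fin.pos_iff_nonempty.mp ?_
    have : 2 ≤ 2 ^ m := by
      calc 2 = 2 ^ 1 := by norm_num
      _ ≤ 2 ^ m := Nat.pow_le_pow_right (by norm_num) hm
    omega
  refine ⟨?_, fun c hc => mainIneq m hm c hc⟩
  have hDpos : ∀ t : ℝ, 0 < Dden m (a t) := fun t => Dden_pos m (a t)
  have hbpos : ∀ (t : ℝ) i, 0 < bVec m (a t) i := fun t i => bVec_pos m hm (a t) i
  have hmono : ∀ i, MonotoneOn (fun s => a s i) (Set.Ici 0) := by
    intro i
    apply monotoneOn_of_deriv_nonneg (convex_Ici 0)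
    · intro t ht
      exact ((hflow t ht i).continuousAt).continuousWithinAt
    · intro t ht
      rw [interior_Ici] at ht
      exact ((hflow t (le_of_lt ht) i).differentiableAt).differentiableWithinAt
    · intro t ht
      rw [interior_Ici] at ht
      rw [(hflow t ht.le i).deriv]
      exact le_of_lt (div_pos (hbpos t i) (hDpos t))
  have hapos : ∀ t ∈ Set.Ici (0:ℝ), ∀ i, 0 < a t i := by
    intro t ht i
    exact lt_of_lt_of_le (hpos i) (hmono i Set.self_mem_Ici ht ht)
  have hSpos : ∀ t ∈ Set.Ici (0:ℝ), 0 < ∑ k, a t k :=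
    fun t ht => Finset.sum_pos (fun i _ => hapos t ht i) hne
  -- the derivative of M along the flow
  have hMder : ∀ t ∈ Set.Ici (0:ℝ), HasDerivAt (fun s => Mmetric m (a s))
      ((1/2) * ∑ i, (2 * (a t i / (∑ k, a t k) - 1/((2:ℝ)^m - 1)) ^ 1 *
        ((bVec m (a t) i / Dden m (a t) * (∑ k, a t k)
          - a t i * (∑ k, bVec m (a t) k / Dden m (a t))) / (∑ k, a t k) ^ 2))) t := by
    intro t ht
    have hSder : HasDerivAt (fun s => ∑ k, a s k)
        (∑ k, bVec m (a t) k / Dden m (a t)) t :=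
      HasDerivAt.fun_sum (fun k _ => hflow t ht k)
    have hterm : ∀ i, HasDerivAt (fun s => (a s i / (∑ k, a s k) - 1/((2:ℝ)^m - 1)) ^ 2)
        (2 * (a t i / (∑ k, a t k) - 1/((2:ℝ)^m - 1)) ^ 1 *
        ((bVec m (a t) i / Dden m (a t) * (∑ k, a t k)
          - a t i * (∑ k, bVec m (a t) k / Dden m (a t))) / (∑ k, a t k) ^ 2)) t := by
      intro i
      exact (((hflow t ht i).div hSder (hSpos t ht).ne').sub_const _).pow 2
    have := ((HasDerivAt.fun_sum (fun i (_ : i ∈ Finset.univ) => hterm i)).const_mul (1/2 : ℝ))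
    exact this
  have hMle : ∀ t ∈ Set.Ici (0:ℝ),
      (1/2) * ∑ i, (2 * (a t i / (∑ k, a t k) - 1/((2:ℝ)^m - 1)) ^ 1 *
        ((bVec m (a t) i / Dden m (a t) * (∑ k, a t k)
          - a t i * (∑ k, bVec m (a t) k / Dden m (a t))) / (∑ k, a t k) ^ 2)) ≤ 0 := by
    intro t ht
    rw [deriv_identity (a t) (bVec m (a t)) (Dden m (a t)) (∑ k, a t k) _
      (hDpos t).ne' (hSpos t ht).ne' rfl]
    have hnum := (mainIneq m hm (a t) (fun i => hapos t ht i)).1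
    exact div_nonpos_iff.mpr (Or.inr ⟨hnum, (mul_pos (hDpos t) (hSpos t ht)).le⟩)
  apply antitoneOn_of_deriv_nonpos (convex_Ici 0)
  · intro t ht
    exact (hMder t ht).continuousAt.continuousWithinAt
  · intro t ht
    rw [interior_Ici] at ht
    exact (hMder t (Set.mem_Ici.mpr (Set.mem_Ioi.mp ht).le)).differentiableAt.differentiableWithinAt
  · intro t ht
    rw [interior_Ici] at ht
    rw [(hMder t (Set.mem_Ici.mpr (Set.mem_Ioi.mp ht).le)).deriv]
    exact hMle t (Set.mem_Ici.mpr (Set.mem_Ioi.mp ht).le)
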